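/- Let T be a triangle in the plane, i.e., T = conv{a, b, c} for three affinely independent points a, b, c ∈ ℝ². For every nonempty finite family F of translates of T, τ(F) ≤ 5 · ν(F) − 2. -/

import Mathlib

namespace PTT
open Finset



/-- `p` pierces the (standard-coordinates) translate at `w`. -/
def covers (p w : ℝ × ℝ) : Prop :=
  w.1 ≤ p.1 ∧ w.2 ≤ p.2 ∧ p.1 + p.2 ≤ w.1 + w.2 + 1

/-- the translates at `u` and `w` intersect. -/
def compat (u w : ℝ × ℝ) : Prop :=
  |u.1 - w.1| ≤ 1 ∧ |u.2 - w.2| ≤ 1 ∧ |u.1 + u.2 - (w.1 + w.2)| ≤ 1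

lemma compat_refl (u : ℝ × ℝ) : compat u u := by
  simp [compat]

lemma compat_symm {u w : ℝ × ℝ} (h : compat u w) : compat w u := by
  obtain ⟨h1, h2, h3⟩ := h
  exact ⟨by rwa [abs_sub_comm], by rwa [abs_sub_comm], by rwa [abs_sub_comm]⟩

lemma compat_of_covers {p u w : ℝ × ℝ} (hu : covers p u) (hw : covers p w) :
    compat u w := by
  obtain ⟨a1, a2, a3⟩ := hu
  obtain ⟨b1, b2, b3⟩ := hw
  refine ⟨abs_le.2 ⟨by linarith, by linarith⟩, abs_le.2 ⟨by linarith, by linarith⟩,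
    abs_le.2 ⟨by linarith, by linarith⟩⟩

noncomputable def fiveP (v : ℝ × ℝ) : Finset (ℝ × ℝ) :=
  {(v.1 + 1/2, v.2 + 1/2), (v.1 + 1, v.2 + 1/2), (v.1 + 1/2, v.2 + 1),
   (v.1 + 1, v.2), (v.1, v.2 + 1)}

lemma fiveP_card (v : ℝ × ℝ) : (fiveP v).card ≤ 5 := by
  refine le_trans (Finset.card_insert_le _ _) (Nat.succ_le_succ ?_)
  refine le_trans (Finset.card_insert_le _ _) (Nat.succ_le_succ ?_)
  refine le_trans (Finset.card_insert_le _ _) (Nat.succ_le_succ ?_)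
  refine le_trans (Finset.card_insert_le _ _) (Nat.succ_le_succ ?_)
  simp

lemma step_cover {v w : ℝ × ℝ} (h : compat v w) (hs : v.1 + v.2 ≤ w.1 + w.2) :
    ∃ p ∈ fiveP v, covers p w := by
  obtain ⟨h1, h2, h3⟩ := h
  rw [abs_le] at h1 h2 h3
  obtain ⟨h1l, h1r⟩ := h1
  obtain ⟨h2l, h2r⟩ := h2
  obtain ⟨h3l, h3r⟩ := h3
  by_cases hc : v.1 + v.2 + 1/2 ≤ w.1 + w.2
  · by_cases hb : w.2 ≤ v.2 + 1/2
    · exact ⟨(v.1 + 1, v.2 + 1/2), by simp [fiveP],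
        by refine ⟨?_, ?_, ?_⟩ <;> simp <;> linarith⟩
    · push_neg at hb
      exact ⟨(v.1 + 1/2, v.2 + 1), by simp [fiveP],
        by refine ⟨?_, ?_, ?_⟩ <;> simp <;> linarith⟩
  · push_neg at hc
    by_cases hb : w.2 ≤ v.2
    · exact ⟨(v.1 + 1, v.2), by simp [fiveP],
        by refine ⟨?_, ?_, ?_⟩ <;> simp <;> linarith⟩
    · by_cases ha : w.1 ≤ v.1
      · exact ⟨(v.1, v.2 + 1), by simp [fiveP],
          by refine ⟨?_, ?_, ?_⟩ <;> simp <;> linarith⟩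
      · push_neg at hb ha
        exact ⟨(v.1 + 1/2, v.2 + 1/2), by simp [fiveP],
          by refine ⟨?_, ?_, ?_⟩ <;> simp <;> linarith⟩

lemma three_cover (V : Finset (ℝ × ℝ)) (v : ℝ × ℝ) (hv : v ∈ V)
    (hmin : ∀ w ∈ V, v.1 + v.2 ≤ w.1 + w.2)
    (hpair : ∀ u ∈ V, ∀ w ∈ V, compat u w) :
    ∃ P : Finset (ℝ × ℝ), P.card ≤ 3 ∧ ∀ w ∈ V, ∃ p ∈ P, covers p w := by
  obtain ⟨α, hα, hαmax⟩ := V.exists_max_image (fun w => w.1) ⟨v, hv⟩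
  obtain ⟨β, hβ, hβmax⟩ := V.exists_max_image (fun w => w.2) ⟨v, hv⟩
  set A := α.1 with hA
  set B := β.2 with hB
  set C := v.1 + v.2 with hC
  set x := (A - B + C + 1) / 2 with hx
  set y := (B - A + C + 1) / 2 with hy
  refine ⟨{(x, y), (A, y), (x, B)}, ?_, ?_⟩
  · refine le_trans (Finset.card_insert_le _ _) (Nat.succ_le_succ ?_)
    refine le_trans (Finset.card_insert_le _ _) (Nat.succ_le_succ ?_)
    simp
  · intro w hw
    have h1 : w.1 ≤ A := hαmax w hw
    have h2 : w.2 ≤ B := hβmax w hw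
    have h3 : C ≤ w.1 + w.2 := hmin w hw
    have h4 : A - 1 ≤ w.1 := by
      have := (hpair α hα w hw).1
      rw [abs_le] at this; linarith [this.2]
    have h5 : B - 1 ≤ w.2 := by
      have := (hpair β hβ w hw).2.1
      rw [abs_le] at this; linarith [this.2]
    have h6 : w.1 + w.2 ≤ C + 1 := by
      have := (hpair v hv w hw).2.2
      rw [abs_le] at this; linarith [this.2]
    by_cases hxc : w.1 ≤ x
    · by_cases hyc : w.2 ≤ y
      · exact ⟨(x, y), by simp, by refine ⟨?_, ?_, ?_⟩ <;> simp <;> linarith⟩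
      · push_neg at hyc
        exact ⟨(x, B), by simp, by refine ⟨?_, ?_, ?_⟩ <;> simp <;> linarith⟩
    · push_neg at hxc
      have hyc : w.2 ≤ y := by
        simp only [hx, hy] at hxc ⊢; linarith
      exact ⟨(A, y), by simp, by refine ⟨?_, ?_, ?_⟩ <;> simp <;> linarith⟩

theorem core (V : Finset (ℝ × ℝ)) (hV : V.Nonempty) :
    ∃ P W : Finset (ℝ × ℝ), W ⊆ V ∧ (∀ w ∈ V, ∃ p ∈ P, covers p w) ∧
      ((W : Set (ℝ × ℝ)).Pairwise fun u w => ¬ compat u w) ∧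
      P.card + 2 ≤ 5 * W.card := by
  classical
  induction V using Finset.strongInduction with
  | _ V ih =>
  obtain ⟨v, hv, hmin⟩ := V.exists_min_image (fun w => w.1 + w.2) hV
  set N := V.filter (fun w => compat v w) with hN
  have hvN : v ∈ N := by
    simp only [hN, mem_filter]
    exact ⟨hv, compat_refl v⟩
  by_cases hR : (V \ N).Nonempty
  · have hss : V \ N ⊂ V := Finset.sdiff_ssubset (filter_subset _ _) ⟨v, hvN⟩
    obtain ⟨P', W', hW'sub, hcov', hpair', hcard'⟩ := ih (V \ N) hss hR
    have hvW' : v ∉ W' := fun h => by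
      have := hW'sub h
      rw [mem_sdiff] at this
      exact this.2 hvN
    refine ⟨P' ∪ fiveP v, insert v W', ?_, ?_, ?_, ?_⟩
    · intro u hu
      rcases Finset.mem_insert.1 hu with h | h
      · exact h ▸ hv
      · exact (Finset.mem_sdiff.1 (hW'sub h)).1
    · intro w hw
      by_cases hwN : w ∈ N
      · obtain ⟨p, hp, hcp⟩ := step_cover ((mem_filter.1 hwN).2) (hmin w hw)
        exact ⟨p, Finset.mem_union_right _ hp, hcp⟩
      · obtain ⟨p, hp, hcp⟩ := hcov' w (mem_sdiff.2 ⟨hw, hwN⟩)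
        exact ⟨p, Finset.mem_union_left _ hp, hcp⟩
    · rw [Finset.coe_insert]
      refine Set.Pairwise.insert hpair' ?_
      intro u hu _
      have huV : u ∈ V \ N := hW'sub hu
      rw [mem_sdiff] at huV
      have hnc : ¬ compat v u := fun h => huV.2 (mem_filter.2 ⟨huV.1, h⟩)
      exact ⟨hnc, fun h => hnc (compat_symm h)⟩
    · have c1 : (P' ∪ fiveP v).card ≤ P'.card + 5 :=
        le_trans (Finset.card_union_le _ _) (by linarith [fiveP_card v])
      rw [Finset.card_insert_of_notMem hvW']
      omega
  · have hVN : ∀ w ∈ V, compat v w := by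
      intro w hw
      by_contra h
      exact hR ⟨w, mem_sdiff.2 ⟨hw, fun hc => h (mem_filter.1 hc).2⟩⟩
    by_cases hp : ∀ u ∈ V, ∀ w ∈ V, compat u w
    · obtain ⟨P, hP3, hPcov⟩ := three_cover V v hv hmin hp
      refine ⟨P, {v}, by simpa using hv, hPcov, by simp, by simp; omega⟩
    · push_neg at hp
      obtain ⟨u, hu, w, hw, hnc⟩ := hp
      have hne : u ≠ w := fun h => hnc (h ▸ compat_refl u)
      refine ⟨fiveP v, {u, w}, ?_, ?_, ?_, ?_⟩
      · intro z hz
        rcases Finset.mem_insert.1 hz with h | h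
        · exact h ▸ hu
        · exact (Finset.mem_singleton.1 h) ▸ hw
      · exact fun z hz => step_cover (hVN z hz) (hmin z hz)
      · rw [Finset.coe_insert, Finset.coe_singleton]
        refine Set.pairwise_insert.2 ⟨Set.pairwise_singleton _ _, ?_⟩
        intro z hz _
        rw [Set.mem_singleton_iff] at hz
        subst hz
        exact ⟨hnc, fun h => hnc (compat_symm h)⟩
      · have : ({u, w} : Finset (ℝ × ℝ)).card = 2 := by
          rw [Finset.card_insert_of_notMem (by simpa using hne), Finset.card_singleton]
        rw [this]
        have := fiveP_card v
        omega


end PTT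


lemma PTT.hull_mem_iff (a b c : EuclideanSpace ℝ (Fin 2))
    (f g : EuclideanSpace ℝ (Fin 2) →ₗ[ℝ] ℝ)
    (hfe1 : f (b - a) = 1) (hfe2 : f (c - a) = 0)
    (hge1 : g (b - a) = 0) (hge2 : g (c - a) = 1)
    (hrepr : ∀ z, z = f z • (b - a) + g z • (c - a)) :
    ∀ x, x ∈ convexHull ℝ ({a, b, c} : Set (EuclideanSpace ℝ (Fin 2))) ↔
      (0 ≤ f (x - a) ∧ 0 ≤ g (x - a) ∧ f (x - a) + g (x - a) ≤ 1) := by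
  intro x
  constructor
  · intro hx
    have hsub : ({a, b, c} : Set (EuclideanSpace ℝ (Fin 2))) ⊆
        {x | 0 ≤ f (x - a) ∧ 0 ≤ g (x - a) ∧ f (x - a) + g (x - a) ≤ 1} := by
      rintro z (rfl | rfl | rfl)
      · simp
      · exact ⟨by rw [hfe1]; norm_num, by rw [hge1], by rw [hfe1, hge1]; norm_num⟩
      · exact ⟨by rw [hfe2], by rw [hge2]; norm_num, by rw [hfe2, hge2]; norm_num⟩
    have hconv : Convex ℝ {x | 0 ≤ f (x - a) ∧ 0 ≤ g (x - a) ∧ f (x - a) + g (x - a) ≤ 1} := by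
      rintro y ⟨hy1, hy2, hy3⟩ z ⟨hz1, hz2, hz3⟩ s t hs ht hst
      have key : s • y + t • z - a = s • (y - a) + t • (z - a) := by
        have h2 : s • (y - a) + t • (z - a) = s • y + t • z - (s + t) • a := by module
        rw [h2, hst, one_smul]
      simp only [Set.mem_setOf_eq, key, map_add, map_smul, smul_eq_mul]
      refine ⟨add_nonneg (mul_nonneg hs hy1) (mul_nonneg ht hz1),
        add_nonneg (mul_nonneg hs hy2) (mul_nonneg ht hz2), ?_⟩
      nlinarith [mul_le_mul_of_nonneg_left (by linarith : f (y-a) + g (y-a) ≤ 1) hs,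
        mul_le_mul_of_nonneg_left (by linarith : f (z-a) + g (z-a) ≤ 1) ht]
    exact convexHull_min hsub hconv hx
  · rintro ⟨h1, h2, h3⟩
    set s := f (x - a) with hs
    set t := g (x - a) with ht
    have hxa : x = a + (s • (b - a) + t • (c - a)) := by
      have := hrepr (x - a)
      rw [← hs, ← ht] at this
      rw [← this]; abel
    have hcomb : x = (1 - s - t) • a + s • b + t • c := by
      rw [hxa]; module
    have hmem := Finset.centerMass_mem_convexHull (Finset.univ : Finset (Fin 3))
      (w := ![1 - s - t, s, t]) (z := ![a, b, c]) (s := ({a, b, c} : Set _))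
      (by intro i _; fin_cases i <;> simp <;> linarith)
      (by simp [Fin.sum_univ_three]; linarith)
      (by intro i _; fin_cases i <;> simp)
    have hcM : (Finset.univ : Finset (Fin 3)).centerMass ![1 - s - t, s, t] ![a, b, c] = x := by
      rw [Finset.centerMass]
      rw [Fin.sum_univ_three, Fin.sum_univ_three]
      simp only [Matrix.cons_val_zero, Matrix.cons_val_one, Matrix.head_cons,
        Matrix.cons_val_two, Matrix.tail_cons]
      rw [show (1 - s - t) + s + t = 1 by ring, inv_one, one_smul, hcomb]
    rwa [hcM] at hmem


open Pointwise

set_option maxHeartbeats 1000000 in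
/-- Let `T` be a triangle in the plane. For every nonempty finite family of translates of
`T`, `τ(F) ≤ 5 · ν(F) − 2` (stated as `τ(F) + 2 ≤ 5 · ν(F)`). -/
theorem piercing_translates_triangle
    (a b c : EuclideanSpace ℝ (Fin 2))
    (habc : AffineIndependent ℝ ![a, b, c])
    (T : Set (EuclideanSpace ℝ (Fin 2)))
    (hT : T = convexHull ℝ {a, b, c})
    (V : Finset (EuclideanSpace ℝ (Fin 2))) (hV : V.Nonempty) :
    ∃ P W : Finset (EuclideanSpace ℝ (Fin 2)),
      W ⊆ V ∧
      (∀ v ∈ V, ∃ x ∈ P, x ∈ v +ᵥ T) ∧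
      ((W : Set (EuclideanSpace ℝ (Fin 2))).Pairwise fun u w =>
        Disjoint (u +ᵥ T) (w +ᵥ T)) ∧
      P.card + 2 ≤ 5 * W.card := by
  classical
  -- coordinates with respect to the basis `(b - a, c - a)`
  have hli0 := (affineIndependent_iff_linearIndependent_vsub ℝ ![a, b, c] 0).1 habc
  have hg : Function.Injective
      (fun i : Fin 2 => (⟨i.succ, Fin.succ_ne_zero i⟩ : {x : Fin 3 // x ≠ 0})) := by
    intro i j h
    simpa [Fin.succ_inj] using Subtype.ext_iff.1 h
  have hli1 := hli0.comp _ hg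
  have heq : ((fun i : {x : Fin 3 // x ≠ 0} => ![a, b, c] ↑i -ᵥ ![a, b, c] 0) ∘
      (fun i : Fin 2 => (⟨i.succ, Fin.succ_ne_zero i⟩ : {x : Fin 3 // x ≠ 0})))
      = ![b - a, c - a] := by
    funext i
    fin_cases i <;> simp [vsub_eq_sub]
  rw [heq] at hli1
  have hcard : Fintype.card (Fin 2) = Module.finrank ℝ (EuclideanSpace ℝ (Fin 2)) := by simp
  set Bs : Module.Basis (Fin 2) ℝ (EuclideanSpace ℝ (Fin 2)) :=
    basisOfLinearIndependentOfCardEqFinrank hli1 hcard with hBsdef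
  have hBs : ⇑Bs = ![b - a, c - a] := coe_basisOfLinearIndependentOfCardEqFinrank _ _
  set f := Bs.coord 0 with hf
  set g := Bs.coord 1 with hgdef
  have hBs0 : Bs 0 = b - a := by rw [hBs]; rfl
  have hBs1 : Bs 1 = c - a := by rw [hBs]; rfl
  have hfe1 : f (b - a) = 1 := by
    rw [← hBs0, hf, Module.Basis.coord_apply, Module.Basis.repr_self]; simp
  have hfe2 : f (c - a) = 0 := by
    rw [← hBs1, hf, Module.Basis.coord_apply, Module.Basis.repr_self]; simp
  have hge1 : g (b - a) = 0 := by
    rw [← hBs0, hgdef, Module.Basis.coord_apply, Module.Basis.repr_self]; simp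
  have hge2 : g (c - a) = 1 := by
    rw [← hBs1, hgdef, Module.Basis.coord_apply, Module.Basis.repr_self]; simp
  have hrepr : ∀ z, z = f z • (b - a) + g z • (c - a) := by
    intro z
    have := Bs.sum_repr z
    rw [Fin.sum_univ_two] at this
    rw [hf, hgdef]
    simp only [Module.Basis.coord_apply]
    rw [hBs0, hBs1] at this
    exact this.symm
  -- membership in `T` in coordinates
  have hmemT : ∀ x, x ∈ T ↔
      (0 ≤ f (x - a) ∧ 0 ≤ g (x - a) ∧ f (x - a) + g (x - a) ≤ 1) := by
    intro x
    rw [hT]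
    exact PTT.hull_mem_iff a b c f g hfe1 hfe2 hge1 hge2 hrepr x
  -- membership in a translate of `T` in coordinates
  have hmemV : ∀ (x v : EuclideanSpace ℝ (Fin 2)),
      x ∈ v +ᵥ T ↔ PTT.covers (f x - f a, g x - g a) (f v, g v) := by
    intro x v
    rw [Set.mem_vadd_set_iff_neg_vadd_mem, vadd_eq_add, hmemT]
    have e1 : -v + x - a = (x - a) - v := by abel
    rw [e1]
    simp only [map_sub, PTT.covers]
    constructor
    · rintro ⟨u1, u2, u3⟩
      exact ⟨by linarith, by linarith, by linarith⟩
    · rintro ⟨u1, u2, u3⟩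
      exact ⟨by linarith, by linarith, by linarith⟩
  have hΦinj : ∀ z₁ z₂ : EuclideanSpace ℝ (Fin 2),
      f z₁ = f z₂ → g z₁ = g z₂ → z₁ = z₂ := by
    intro z₁ z₂ h₁ h₂
    rw [hrepr z₁, hrepr z₂, h₁, h₂]
  -- apply the combinatorial core theorem in coordinates
  obtain ⟨P₀, W₀, hW₀V₀, hcov₀, hpair₀, hcard₀⟩ :=
    PTT.core (V.image (fun v => (f v, g v))) (hV.image _)
  refine ⟨P₀.image (fun p => a + p.1 • (b - a) + p.2 • (c - a)),
    V.filter (fun v => (f v, g v) ∈ W₀), Finset.filter_subset _ _, ?_, ?_, ?_⟩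
  · intro v hv
    obtain ⟨p, hp, hcp⟩ := hcov₀ _ (Finset.mem_image_of_mem _ hv)
    refine ⟨a + p.1 • (b - a) + p.2 • (c - a), Finset.mem_image_of_mem _ hp, ?_⟩
    rw [hmemV]
    have hfx : f (a + p.1 • (b - a) + p.2 • (c - a)) - f a = p.1 := by
      simp [map_add, map_smul, hfe1, hfe2]
    have hgx : g (a + p.1 • (b - a) + p.2 • (c - a)) - g a = p.2 := by
      simp [map_add, map_smul, hge1, hge2]
    have : (f (a + p.1 • (b - a) + p.2 • (c - a)) - f a,
        g (a + p.1 • (b - a) + p.2 • (c - a)) - g a) = p := by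
      rw [hfx, hgx]
    rw [this]
    exact hcp
  · intro u hu w hw hne
    rw [Finset.mem_coe, Finset.mem_filter] at hu hw
    have hΦne : (f u, g u) ≠ (f w, g w) := fun h =>
      hne (hΦinj u w (congrArg Prod.fst h) (congrArg Prod.snd h))
    have hnc : ¬ PTT.compat (f u, g u) (f w, g w) :=
      hpair₀ (Finset.mem_coe.2 hu.2) (Finset.mem_coe.2 hw.2) hΦne
    rw [Set.disjoint_left]
    intro x hxu hxw
    rw [hmemV] at hxu hxw
    exact hnc (PTT.compat_of_covers hxu hxw)
  · have h1 : (P₀.image (fun p => a + p.1 • (b - a) + p.2 • (c - a))).card ≤ P₀.card :=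
      Finset.card_image_le
    have h2 : W₀.card ≤ (V.filter (fun v => (f v, g v) ∈ W₀)).card := by
      have hsub : W₀ ⊆ (V.filter (fun v => (f v, g v) ∈ W₀)).image (fun v => (f v, g v)) := by
        intro w₀ hw₀
        obtain ⟨v, hv, rfl⟩ := Finset.mem_image.1 (hW₀V₀ hw₀)
        exact Finset.mem_image_of_mem _ (Finset.mem_filter.2 ⟨hv, hw₀⟩)
      exact le_trans (Finset.card_le_card hsub) Finset.card_image_le
    omega
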